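/- Counting the basis elements: for every N ∈ ℕ and every w ≥ 1, Σ_{𝔰 ∈ S_w} γ_N^{depth(𝔰)} = d_N(w); that is, the number of pairs (𝔰,𝛆) with 𝔰 ∈ S_w and 𝛆 ∈ Γ_N^{depth(𝔰)} equals d_N(w). -/

import Mathlib

noncomputable section

open scoped Classical

namespace ZHPC

variable (Fq : Type) [Field Fq] [Fintype Fq]

/-- `q`, the cardinality of the base finite field `𝔽_q`. -/
def qc : ℕ := Fintype.card Fq

/-- A fixed algebraic closure `𝔽̄_q` of `𝔽_q`. -/
abbrev Fb := AlgebraicClosure Fq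

/-- The field `𝔽̄_q((1/θ))` of formal Laurent series in `1/θ` over `𝔽̄_q`, modeled as the
field of formal Laurent series in one variable, `θ` being the inverse of that variable. -/
abbrev Kinf := LaurentSeries (Fb Fq)

/-- The embedding of the constants `𝔽̄_q → 𝔽̄_q((1/θ))`. -/
def cst : Fb Fq →+* Kinf Fq := HahnSeries.C

/-- The element `θ`. -/
def theta : Kinf Fq := HahnSeries.single (-1 : ℤ) 1

/-- `ℓ_d = ∏_{i=1}^{d} (θ - θ^{q^i})`, with `ℓ_0 = 1`. -/
def ell (d : ℕ) : Kinf Fq := ∏ i ∈ Finset.Icc 1 d, (theta Fq - theta Fq ^ qc Fq ^ i)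

/-- Arrays `(𝛆;𝔰)` of some depth `n`. -/
structure PArr (F : Type) where
  depth : ℕ
  s : Fin depth → ℕ
  eps : Fin depth → F

namespace PArr

variable {F : Type}

/-- A *positive array* for level `N`: all entries `sᵢ` are positive integers and all the
characters `εᵢ` are `N`-th roots of unity. -/
def Positive [Monoid F] (N : ℕ) (A : PArr F) : Prop := (∀ i, 0 < A.s i) ∧ ∀ i, A.eps i ^ N = 1

/-- The weight `w(𝔰) = s₁ + ⋯ + s_n`. -/
def wt (A : PArr F) : ℕ := ∑ i, A.s i

/-- The `i`-th entry of `𝔰` (`0`-indexed), with value `0` beyond the depth. -/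
def sAt (A : PArr F) (i : ℕ) : ℕ := if h : i < A.depth then A.s ⟨i, h⟩ else 0

/-- The partial sums `s₁ + ⋯ + s_i` (entries beyond the depth being `0`). -/
def psum (A : PArr F) (i : ℕ) : ℕ := ∑ j ∈ Finset.range i, A.sAt j

/-- The character `χ(𝛆) = ε₁ ⋯ ε_n`. -/
def chi [CommMonoid F] (A : PArr F) : F := ∏ i, A.eps i

end PArr

/-- The Carlitz multiple polylogarithm at roots of unity
`Li(𝛆;𝔰) = Σ_{d₁ > ⋯ > d_n ≥ 0} ε₁^{d₁}⋯ε_n^{d_n} / (ℓ_{d₁}^{s₁}⋯ℓ_{d_n}^{s_n})`. -/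
def Li (A : PArr (Fb Fq)) : Kinf Fq :=
  ∑' d : {f : Fin A.depth → ℕ // StrictAnti f},
    ∏ i, cst Fq (A.eps i ^ d.1 i) / ell Fq (d.1 i) ^ A.s i

/-- `Si_d(𝛆;𝔰)`: same summand as `Li`, over decreasing tuples with `d₁ = d`. -/
def Sid (d : ℤ) (A : PArr (Fb Fq)) : Kinf Fq :=
  ∑' f : {f : Fin A.depth → ℕ // StrictAnti f ∧ ∀ i : Fin A.depth, i.val = 0 → (f i : ℤ) = d},
    ∏ i, cst Fq (A.eps i ^ f.1 i) / ell Fq (f.1 i) ^ A.s i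

/-- `Si_{<d}(𝛆;𝔰)`: same summand as `Li`, over decreasing tuples with `d > d₁`. -/
def SidLt (d : ℤ) (A : PArr (Fb Fq)) : Kinf Fq :=
  ∑' f : {f : Fin A.depth → ℕ // StrictAnti f ∧ ∀ i : Fin A.depth, (f i : ℤ) < d},
    ∏ i, cst Fq (A.eps i ^ f.1 i) / ell Fq (f.1 i) ^ A.s i

/-- The value at `θ` of the monic polynomial `θ^e + Σ_{j<e} c_j θ^j ∈ A = 𝔽_q[θ]`. -/
def monicVal (e : ℕ) (c : Fin e → Fq) : Kinf Fq :=
  theta Fq ^ e + ∑ j, cst Fq (algebraMap Fq (Fb Fq) (c j)) * theta Fq ^ (j : ℕ)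

/-- The power sum `S_d(𝛆;𝔰)`, a sum over tuples of monic polynomials `a₁, …, a_n ∈ A₊`
with `d = deg a₁ > ⋯ > deg a_n ≥ 0`; a monic polynomial of degree `e` is encoded by its
tuple of lower coefficients `c : Fin e → Fq`. -/
def Sd (d : ℤ) (A : PArr (Fb Fq)) : Kinf Fq :=
  ∑' e : {f : Fin A.depth → ℕ // StrictAnti f ∧ ∀ i : Fin A.depth, i.val = 0 → (f i : ℤ) = d},
    ∑ c : (∀ i, Fin (e.1 i) → Fq),
      ∏ i, cst Fq (A.eps i ^ e.1 i) / monicVal Fq (e.1 i) (c i) ^ A.s i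

/-- The `N`-th cyclotomic multiple zeta value `ζ_A(𝛆;𝔰) = Σ_{d ≥ 0} S_d(𝛆;𝔰)`. -/
def zetaA (A : PArr (Fb Fq)) : Kinf Fq := ∑' d : ℕ, Sd Fq (d : ℤ) A

/-- The cyclotomic field `k_N = 𝔽_q(ζ_N) ⊆ 𝔽̄_q`. -/
def kN (N : ℕ) : Subfield (Fb Fq) :=
  Subfield.closure (Set.range (algebraMap Fq (Fb Fq)) ∪ {x | x ^ N = 1})

/-- The field `K_N = k_N(θ)`, as a subfield of `𝔽̄_q((1/θ))`. -/
def KNf (N : ℕ) : Subfield (Kinf Fq) :=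
  Subfield.closure ((cst Fq '' (kN Fq N : Set (Fb Fq))) ∪ {theta Fq})

/-- The ring `A_N = k_N[θ]`, as a subring of `𝔽̄_q((1/θ))`. -/
def AN (N : ℕ) : Subring (Kinf Fq) :=
  Subring.closure ((cst Fq '' (kN Fq N : Set (Fb Fq))) ∪ {theta Fq})

/-- `CZ_{N,w}`: the `K_N`-span of the `N`-th cyclotomic multiple zeta values of weight `w`. -/
def CZ (N w : ℕ) : Submodule (KNf Fq N) (Kinf Fq) :=
  Submodule.span (KNf Fq N) {x | ∃ A : PArr (Fb Fq), A.Positive N ∧ A.wt = w ∧ x = zetaA Fq A}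

/-- `CL_{N,w}`: the `K_N`-span of the CMPL's at `N`-th roots of unity of weight `w`. -/
def CL (N w : ℕ) : Submodule (KNf Fq N) (Kinf Fq) :=
  Submodule.span (KNf Fq N) {x | ∃ A : PArr (Fb Fq), A.Positive N ∧ A.wt = w ∧ x = Li Fq A}

/-- The index set of pairs `(𝔰,𝛆)` with `𝔰 ∈ S_w` and `𝛆 ∈ Γ_N^{depth 𝔰}`: positive arrays
of weight `w` with `q ∤ sᵢ` for all `i`. -/
def SwIdx (N w : ℕ) : Type :=
  {A : PArr (Fb Fq) // A.Positive N ∧ 0 < A.depth ∧ A.wt = w ∧ ∀ i, ¬ qc Fq ∣ A.s i}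

/-- `γ_N = |Γ_N|`, the number of `N`-th roots of unity in `𝔽̄_q`. -/
def gammaN (N : ℕ) : ℕ := Nat.card {x : Fb Fq // x ^ N = 1}

/-- The sequence `d_N(w)` (depending on `γ = γ_N` and `Q = q`): `d_N(0) = 1`,
`d_N(w) = γ(γ+1)^{w-1}` for `1 ≤ w < q`, `d_N(q) = γ((γ+1)^{q-1} - 1)`, and
`d_N(w) = γ·Σ_{i=1}^{q-1} d_N(w-i) + d_N(w-q)` for `w > q`. -/
def dN (γ Q : ℕ) : ℕ → ℕ
  | 0 => 1
  | (w + 1) =>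
    if w + 1 < Q then γ * (γ + 1) ^ w
    else if w + 1 = Q then γ * ((γ + 1) ^ (Q - 1) - 1)
    else γ * (∑ j ∈ Finset.range (Q - 1), dN γ Q (w - j)) + dN γ Q (w - (Q - 1))
  termination_by w => w
  decreasing_by all_goals omega


lemma dN_lt {γ Q w : ℕ} (h1 : 1 ≤ w) (h2 : w < Q) :
    dN γ Q w = γ * (γ + 1) ^ (w - 1) := by
  obtain ⟨m, rfl⟩ : ∃ m, w = m + 1 := ⟨w - 1, by omega⟩
  rw [dN, if_pos h2]; rfl

lemma dN_Q {γ Q : ℕ} (hQ : 1 ≤ Q) :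
    dN γ Q Q = γ * ((γ + 1) ^ (Q - 1) - 1) := by
  obtain ⟨m, rfl⟩ : ∃ m, Q = m + 1 := ⟨Q - 1, by omega⟩
  rw [dN, if_neg (lt_irrefl _), if_pos rfl]

lemma dN_gt {γ Q w : ℕ} (hQ1 : 1 ≤ Q) (h : Q < w) :
    dN γ Q w = γ * (∑ j ∈ Finset.range (Q - 1), dN γ Q (w - 1 - j)) + dN γ Q (w - Q) := by
  obtain ⟨m, rfl⟩ : ∃ m, w = m + 1 := ⟨w - 1, by omega⟩
  rw [dN]
  rw [if_neg (by omega : ¬ (m + 1 < Q))]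
  rw [if_neg (by omega : ¬ (m + 1 = Q))]
  have h1 : m - (Q - 1) = m + 1 - Q := by omega
  rw [h1]
  simp only [Nat.add_sub_cancel]

lemma sum_Icc_sub (f : ℕ → ℕ) (w : ℕ) :
    ∑ s ∈ Finset.Icc 1 w, f (w - s) = ∑ u ∈ Finset.range w, f u := by
  apply Finset.sum_nbij' (i := fun s => w - s) (j := fun u => w - u)
  · intro a ha; simp only [Finset.mem_Icc] at ha; simp only [Finset.mem_range]; omega
  · intro a ha; simp only [Finset.mem_range] at ha; simp only [Finset.mem_Icc]; omega
  · intro a ha; simp only [Finset.mem_Icc] at ha; omega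
  · intro a ha; simp only [Finset.mem_range] at ha; omega
  · intro a _; rfl

lemma sum_dN (γ Q : ℕ) (hQ : 2 ≤ Q) : ∀ w, 1 ≤ w → w ≤ Q →
    ∑ u ∈ Finset.range w, dN γ Q u = (γ + 1) ^ (w - 1) := by
  intro w
  induction w with
  | zero => omega
  | succ n ih =>
    intro _ hle
    rcases Nat.eq_zero_or_pos n with rfl | hn
    · simp [dN]
    · rw [Finset.sum_range_succ, ih hn (by omega), dN_lt hn (by omega)]
      have : (γ + 1) ^ n = (γ + 1) ^ (n - 1) * (γ + 1) := by
        rw [← pow_succ]; congr 1; omega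
      simp only [Nat.add_sub_cancel]
      rw [this]; ring

lemma dN_rec (γ Q : ℕ) (hQ : 2 ≤ Q) : ∀ w, 1 ≤ w →
    dN γ Q w = ∑ s ∈ (Finset.Icc 1 w).filter (fun s => ¬ Q ∣ s), γ * dN γ Q (w - s) := by
  intro w
  induction w using Nat.strong_induction_on with
  | _ w IH =>
    intro hw
    rcases lt_trichotomy w Q with hlt | heq | hgt
    · -- w < Q
      rw [Finset.filter_true_of_mem (fun s hs hd => by
        simp only [Finset.mem_Icc] at hs
        exact absurd (Nat.le_of_dvd (by omega) hd) (by omega))]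
      rw [← Finset.mul_sum, sum_Icc_sub (fun u => dN γ Q u) w,
        sum_dN γ Q hQ w hw (by omega), dN_lt hw hlt]
    · -- w = Q
      subst heq
      have hfil : (Finset.Icc 1 w).filter (fun s => ¬ w ∣ s) = Finset.Icc 1 (w - 1) := by
        ext s
        simp only [Finset.mem_filter, Finset.mem_Icc]
        constructor
        · rintro ⟨⟨h1, h2⟩, h3⟩
          refine ⟨h1, ?_⟩
          rcases Nat.eq_or_lt_of_le h2 with rfl | h4
          · exact absurd dvd_rfl h3
          · omega
        · rintro ⟨h1, h2⟩
          refine ⟨⟨h1, by omega⟩, fun hd => absurd (Nat.le_of_dvd (by omega) hd) (by omega)⟩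
      rw [hfil, ← Finset.mul_sum]
      have hre : ∑ s ∈ Finset.Icc 1 (w - 1), dN γ w (w - s)
          = ∑ u ∈ Finset.Icc 1 (w - 1), dN γ w u := by
        apply Finset.sum_nbij' (i := fun s => w - s) (j := fun u => w - u) <;>
          intro a ha <;> simp only [Finset.mem_Icc] at ha ⊢ <;> first | omega | rfl
      have hins : Finset.range w = insert 0 (Finset.Icc 1 (w - 1)) := by
        ext a; simp only [Finset.mem_range, Finset.mem_insert, Finset.mem_Icc]; omega
      have hd0 : dN γ w 0 = 1 := by simp [dN]
      have hsum : 1 + ∑ u ∈ Finset.Icc 1 (w - 1), dN γ w u = (γ + 1) ^ (w - 1) := by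
        rw [← sum_dN γ w hQ w hw le_rfl, hins, Finset.sum_insert (by simp), hd0]
      rw [hre, dN_Q (by omega : 1 ≤ w)]
      congr 1
      omega
    · -- Q < w
      have hsplit : (Finset.Icc 1 w).filter (fun s => ¬ Q ∣ s)
          = Finset.Icc 1 (Q - 1) ∪ (Finset.Icc (Q + 1) w).filter (fun s => ¬ Q ∣ s) := by
        ext s
        simp only [Finset.mem_filter, Finset.mem_Icc, Finset.mem_union]
        constructor
        · rintro ⟨⟨h1, h2⟩, h3⟩
          rcases lt_trichotomy s Q with h | rfl | h
          · exact Or.inl ⟨h1, by omega⟩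
          · exact absurd dvd_rfl h3
          · exact Or.inr ⟨⟨by omega, h2⟩, h3⟩
        · rintro (⟨h1, h2⟩ | ⟨⟨h1, h2⟩, h3⟩)
          · exact ⟨⟨h1, by omega⟩,
              fun hd => absurd (Nat.le_of_dvd (by omega) hd) (by omega)⟩
          · exact ⟨⟨by omega, h2⟩, h3⟩
      have hdisj : Disjoint (Finset.Icc 1 (Q - 1))
          ((Finset.Icc (Q + 1) w).filter (fun s => ¬ Q ∣ s)) := by
        rw [Finset.disjoint_left]
        intro a ha hb
        simp only [Finset.mem_Icc] at ha
        simp only [Finset.mem_filter, Finset.mem_Icc] at hb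
        omega
      rw [hsplit, Finset.sum_union hdisj]
      have h2nd : ∑ s ∈ (Finset.Icc (Q + 1) w).filter (fun s => ¬ Q ∣ s), γ * dN γ Q (w - s)
          = ∑ t ∈ (Finset.Icc 1 (w - Q)).filter (fun s => ¬ Q ∣ s), γ * dN γ Q (w - Q - t) := by
        apply Finset.sum_nbij' (i := fun s => s - Q) (j := fun t => t + Q)
        · intro a ha
          simp only [Finset.mem_filter, Finset.mem_Icc] at ha ⊢
          refine ⟨by omega, fun hd => ha.2 ?_⟩
          have : a = (a - Q) + Q := by omega
          rw [this]; exact dvd_add hd dvd_rfl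
        · intro a ha
          simp only [Finset.mem_filter, Finset.mem_Icc] at ha ⊢
          exact ⟨by omega, fun hd => ha.2 (by simpa using Nat.dvd_sub hd dvd_rfl)⟩
        · intro a ha; simp only [Finset.mem_filter, Finset.mem_Icc] at ha; omega
        · intro a ha; simp only [Finset.mem_filter, Finset.mem_Icc] at ha; omega
        · intro a ha
          simp only [Finset.mem_filter, Finset.mem_Icc] at ha
          have hx : w - a = w - Q - (a - Q) := by omega
          rw [hx]
      rw [h2nd, ← IH (w - Q) (by omega) (by omega)]
      rw [dN_gt (by omega) hgt]
      congr 1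
      rw [← Finset.mul_sum]
      congr 1
      apply Finset.sum_nbij' (i := fun j => j + 1) (j := fun i => i - 1)
      · intro a ha; simp only [Finset.mem_range] at ha; simp only [Finset.mem_Icc]; omega
      · intro a ha; simp only [Finset.mem_Icc] at ha; simp only [Finset.mem_range]; omega
      · intro a _; omega
      · intro a ha; simp only [Finset.mem_Icc] at ha; omega
      · intro a ha; simp only [Finset.mem_range] at ha; congr 1; omega

-- ### auxiliary development
def gcnt (γ Q : ℕ) : ℕ → ℕ
  | 0 => 1
  | (w + 1) => ∑ s ∈ ((Finset.Icc 1 (w + 1)).filter (fun s => ¬ Q ∣ s)).attach,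
      γ * gcnt γ Q (w + 1 - s.1)
  termination_by w => w
  decreasing_by
    have hs := s.2
    simp only [Finset.mem_filter, Finset.mem_Icc] at hs
    omega

def TL (N w : ℕ) : Type :=
  {l : List (ℕ × Fb Fq) //
    (∀ p ∈ l, ((0 < p.1 ∧ ¬ qc Fq ∣ p.1) ∧ p.2 ^ N = 1)) ∧ (l.map Prod.fst).sum = w}

lemma gcnt_succ (γ Q w : ℕ) : gcnt γ Q (w + 1)
    = ∑ s ∈ (Finset.Icc 1 (w + 1)).filter (fun s => ¬ Q ∣ s), γ * gcnt γ Q (w + 1 - s) := by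
  rw [gcnt]
  exact Finset.sum_attach _ fun s => γ * gcnt γ Q (w + 1 - s)

lemma gam_finite {N : ℕ} (hN : 0 < N) : Finite {x : Fb Fq // x ^ N = 1} := by
  have h : {x : Fb Fq | x ^ N = 1}.Finite := by
    have hp : ((Polynomial.X : Polynomial (Fb Fq)) ^ N - Polynomial.C 1) ≠ 0 := by
      intro h
      have := congrArg Polynomial.natDegree h
      rw [Polynomial.natDegree_X_pow_sub_C] at this
      simp at this
      omega
    refine (Polynomial.finite_setOf_isRoot hp).subset ?_
    intro x hx
    simp only [Set.mem_setOf_eq] at hx ⊢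
    simp [Polynomial.IsRoot, hx]
  exact h.to_subtype

def toTL (N w : ℕ) (A : SwIdx Fq N w) : TL Fq N w :=
  ⟨List.ofFn (fun i => (A.1.s i, A.1.eps i)), by
    intro p hp
    rw [List.mem_ofFn] at hp
    obtain ⟨i, rfl⟩ := hp
    exact ⟨⟨A.2.1.1 i, A.2.2.2.2 i⟩, A.2.1.2 i⟩, by
    rw [List.map_ofFn, List.sum_ofFn]
    exact A.2.2.2.1⟩

lemma toTL_bijective (N w : ℕ) (hw : 1 ≤ w) : Function.Bijective (toTL Fq N w) := by
  constructor
  · rintro ⟨⟨n, s, e⟩, hA⟩ ⟨⟨m, s', e'⟩, hB⟩ h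
    have h' : List.ofFn (fun i => (s i, e i)) = List.ofFn (fun i => (s' i, e' i)) :=
      congrArg Subtype.val h
    have hnm : n = m := by
      have := congrArg List.length h'
      simpa using this
    subst hnm
    have hfg := List.ofFn_injective h'
    have hs : s = s' := funext fun i => congrArg Prod.fst (congrFun hfg i)
    have he : e = e' := funext fun i => congrArg Prod.snd (congrFun hfg i)
    subst hs; subst he
    rfl
  · rintro ⟨l, hl, hsum⟩
    have hA : ∀ i : Fin l.length, ((0 < (l.get i).1 ∧ ¬ qc Fq ∣ (l.get i).1) ∧ (l.get i).2 ^ N = 1) :=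
      fun i => hl (l.get i) (l.get_mem i)
    have hwt : (∑ i : Fin l.length, (l.get i).1) = w := by
      calc (∑ i : Fin l.length, (l.get i).1)
          = (List.ofFn fun i => (l.get i).1).sum := Eq.symm List.sum_ofFn
        _ = ((List.ofFn l.get).map Prod.fst).sum := by rw [List.map_ofFn]; rfl
        _ = (l.map Prod.fst).sum := by rw [List.ofFn_get]
        _ = w := hsum
    have hdep : 0 < l.length := by
      rcases l with _ | ⟨p, r⟩
      · simp at hsum; omega
      · simp
    refine ⟨⟨⟨l.length, fun i => (l.get i).1, fun i => (l.get i).2⟩,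
      ⟨fun i => (hA i).1.1, fun i => (hA i).2⟩, hdep, hwt, fun i => (hA i).1.2⟩, ?_⟩
    have hfun : (fun i : Fin l.length => ((l.get i).1, (l.get i).2)) = l.get := rfl
    apply Subtype.ext
    show List.ofFn (fun i : Fin l.length => ((l.get i).1, (l.get i).2)) = l
    rw [hfun, List.ofFn_get]

lemma TL_zero_sub (N : ℕ) : Subsingleton (TL Fq N 0) := by
  constructor
  rintro ⟨l1, h1, hs1⟩ ⟨l2, h2, hs2⟩
  have hnil : ∀ (l : List (ℕ × Fb Fq)), (∀ p ∈ l, ((0 < p.1 ∧ ¬ qc Fq ∣ p.1) ∧ p.2 ^ N = 1)) →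
      (l.map Prod.fst).sum = 0 → l = [] := by
    rintro (_ | ⟨p, r⟩) h hs
    · rfl
    · exfalso
      simp only [List.map_cons, List.sum_cons] at hs
      have := (h p (by simp)).1.1
      omega
  exact Subtype.ext (show l1 = l2 by rw [hnil l1 h1 hs1, hnil l2 h2 hs2])

def SW (w : ℕ) : Finset ℕ := (Finset.Icc 1 w).filter (fun s => ¬ qc Fq ∣ s)

def consTL (N w : ℕ) (x : Σ s : {s // s ∈ SW Fq w},
    ({x : Fb Fq // x ^ N = 1} × TL Fq N (w - s.1))) : TL Fq N w := by
  refine ⟨(x.1.1, x.2.1.1) :: x.2.2.1, ?_, ?_⟩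
  · intro p hp
    rcases List.mem_cons.mp hp with rfl | hp'
    · have hs := x.1.2
      simp only [SW, Finset.mem_filter, Finset.mem_Icc] at hs
      exact ⟨⟨by omega, hs.2⟩, x.2.1.2⟩
    · exact x.2.2.2.1 p hp'
  · simp only [List.map_cons, List.sum_cons, x.2.2.2.2]
    have hs := x.1.2
    simp only [SW, Finset.mem_filter, Finset.mem_Icc] at hs
    omega

lemma consTL_bijective (N w : ℕ) (hw : 1 ≤ w) : Function.Bijective (consTL Fq N w) := by
  constructor
  · rintro ⟨⟨s, hs⟩, ε, ⟨l, hl⟩⟩ ⟨⟨s', hs'⟩, ε', ⟨l', hl'⟩⟩ h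
    have h' : (s, ε.1) :: l = (s', ε'.1) :: l' := congrArg Subtype.val h
    rw [List.cons.injEq, Prod.mk.injEq] at h'
    obtain ⟨⟨h1, h2⟩, h3⟩ := h'
    subst h1
    have hε : ε = ε' := Subtype.ext h2
    have hll : (⟨l, hl⟩ : TL Fq N (w - s)) = ⟨l', hl'⟩ := Subtype.ext h3
    have hpair : ((ε, ⟨l, hl⟩) : {x : Fb Fq // x ^ N = 1} × TL Fq N (w - s))
        = (ε', ⟨l', hl'⟩) := by rw [hε, hll]
    exact congrArg (Sigma.mk _) hpair
  · rintro ⟨l, hl, hsum⟩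
    rcases l with _ | ⟨p, r⟩
    · exfalso; simp at hsum; omega
    · simp only [List.map_cons, List.sum_cons] at hsum
      have hp := hl p (by simp)
      have hs : p.1 ∈ SW Fq w := by
        simp only [SW, Finset.mem_filter, Finset.mem_Icc]
        exact ⟨⟨hp.1.1, by omega⟩, hp.1.2⟩
      refine ⟨⟨⟨p.1, hs⟩, ⟨p.2, hp.2⟩, ⟨r, fun q hq => hl q (by simp [hq]),
        (by omega : (List.map Prod.fst r).sum = w - p.1)⟩⟩, Subtype.ext rfl⟩

lemma TL_finite (N : ℕ) (hN : 0 < N) : ∀ w, Finite (TL Fq N w) := by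
  intro w
  induction w using Nat.strong_induction_on with
  | _ w IH =>
    rcases Nat.eq_zero_or_pos w with rfl | hw
    · haveI := TL_zero_sub Fq N
      infer_instance
    · haveI := gam_finite Fq hN
      haveI : ∀ s : {s // s ∈ SW Fq w}, Finite ({x : Fb Fq // x ^ N = 1} × TL Fq N (w - s.1)) := by
        intro s
        have hs := s.2
        simp only [SW, Finset.mem_filter, Finset.mem_Icc] at hs
        haveI := IH (w - s.1) (by omega)
        infer_instance
      exact Finite.of_surjective _ (consTL_bijective Fq N w hw).2

lemma card_TL (N : ℕ) (hN : 0 < N) :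
    ∀ w, Nat.card (TL Fq N w) = gcnt (gammaN Fq N) (qc Fq) w := by
  intro w
  induction w using Nat.strong_induction_on with
  | _ w IH =>
    rcases Nat.eq_zero_or_pos w with rfl | hw
    · have hne : Nonempty (TL Fq N 0) :=
        ⟨⟨[], fun p hp => absurd hp List.not_mem_nil, rfl⟩⟩
      rw [Nat.card_eq_one_iff_unique.mpr ⟨TL_zero_sub Fq N, hne⟩]
      simp [gcnt]
    · obtain ⟨u, rfl⟩ : ∃ u, w = u + 1 := ⟨w - 1, by omega⟩
      haveI := gam_finite Fq hN
      haveI hfin : ∀ s : {s // s ∈ SW Fq (u + 1)},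
          Finite ({x : Fb Fq // x ^ N = 1} × TL Fq N (u + 1 - s.1)) := by
        intro s
        have hs := s.2
        simp only [SW, Finset.mem_filter, Finset.mem_Icc] at hs
        haveI := TL_finite Fq N hN (u + 1 - s.1)
        infer_instance
      haveI : ∀ s : {s // s ∈ SW Fq (u + 1)},
          Fintype ({x : Fb Fq // x ^ N = 1} × TL Fq N (u + 1 - s.1)) :=
        fun s => Fintype.ofFinite _
      rw [← Nat.card_eq_of_bijective _ (consTL_bijective Fq N (u + 1) (by omega))]
      rw [Nat.card_eq_fintype_card, Fintype.card_sigma]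
      have hper : ∀ s : {s // s ∈ SW Fq (u + 1)},
          Fintype.card ({x : Fb Fq // x ^ N = 1} × TL Fq N (u + 1 - s.1))
            = gammaN Fq N * gcnt (gammaN Fq N) (qc Fq) (u + 1 - s.1) := by
        intro s
        have hs := s.2
        simp only [SW, Finset.mem_filter, Finset.mem_Icc] at hs
        rw [← Nat.card_eq_fintype_card, Nat.card_prod, IH (u + 1 - s.1) (by omega)]
        rfl
      rw [Finset.sum_congr rfl (fun s _ => hper s)]
      rw [Finset.sum_coe_sort (SW Fq (u + 1))
        (fun t => gammaN Fq N * gcnt (gammaN Fq N) (qc Fq) (u + 1 - t))]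
      rw [gcnt_succ]
      rfl

lemma gcnt_eq_dN (γ Q : ℕ) (hQ : 2 ≤ Q) : ∀ w, gcnt γ Q w = dN γ Q w := by
  intro w
  induction w using Nat.strong_induction_on with
  | _ w IH =>
    match w with
    | 0 => simp [gcnt, dN]
    | (w + 1) =>
      rw [gcnt_succ, dN_rec γ Q hQ (w + 1) (by omega)]
      apply Finset.sum_congr rfl
      intro s hs
      simp only [Finset.mem_filter, Finset.mem_Icc] at hs
      rw [IH (w + 1 - s) (by omega)]

/-- **Counting the basis elements**: for every `N ∈ ℕ` and `w ≥ 1`, the number of pairs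
`(𝔰,𝛆)` with `𝔰 ∈ S_w` and `𝛆 ∈ Γ_N^{depth 𝔰}` — equivalently
`Σ_{𝔰 ∈ S_w} γ_N^{depth 𝔰}` — equals `d_N(w)`. -/
theorem counting_basis_elements
    (Fq : Type) [Field Fq] [Fintype Fq] (N w : ℕ) (hN : 0 < N) (hw : 1 ≤ w) :
    Nat.card (SwIdx Fq N w) = dN (gammaN Fq N) (qc Fq) w := by
  have hQ : 2 ≤ qc Fq := Fintype.one_lt_card
  rw [Nat.card_eq_of_bijective _ (toTL_bijective Fq N w hw), card_TL Fq N hN w]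
  exact gcnt_eq_dN _ _ hQ w

end ZHPC
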